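/- If λ₁<λ₂, then the two-processor embedded chain admits an invariant probability distribution, i.e. there exists a probability mass function π on ℤ such that Σ_y π(y)·p_{yz} = π(z) for every z∈ℤ. -/

import Mathlib

noncomputable section

/-- Transition probabilities of the embedded relative-coordinate chain of the
two-processor cascade model on `ℤ`: `p_{i,i+1} = λ₂`, `p_{i,i−1} = λ₁`,
`p_{i,0} = β₁₂` for `i ≥ 0`, `p_{i,i} = β₁₂` for `i < 0` (probabilities assigned
to the same target state add). -/
def pker2 (l1 l2 b12 : ℝ) (i j : ℤ) : ℝ :=
  (if j = i + 1 then l2 else 0) + (if j = i - 1 then l1 else 0) +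
    (if 0 ≤ i ∧ j = 0 then b12 else 0) + (if i < 0 ∧ j = i then b12 else 0)

/-- if `λ₁ < λ₂`, the two-processor embedded chain admits an invariant
probability distribution `π` on `ℤ`. -/
theorem stmt18 (l1 l2 b12 : ℝ) (hl1 : 0 < l1) (hl2 : 0 < l2) (hb12 : 0 < b12)
    (hsum : l1 + l2 + b12 = 1) (h : l1 < l2) :
    ∃ π : ℤ → ℝ, (∀ y, 0 ≤ π y) ∧ Summable π ∧ (∑' y : ℤ, π y) = 1 ∧
      ∀ z : ℤ, Summable (fun y : ℤ => π y * pker2 l1 l2 b12 y z) ∧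
        (∑' y : ℤ, π y * pker2 l1 l2 b12 y z) = π z := by
  -- discriminant
  have hd : 0 < 1 - 4 * l1 * l2 := by nlinarith [sq_nonneg (l1 + l2), sq_nonneg (l1 - l2)]
  set u := Real.sqrt (1 - 4 * l1 * l2) with hu
  have hu0 : 0 ≤ u := Real.sqrt_nonneg _
  have hu2 : u ^ 2 = 1 - 4 * l1 * l2 := Real.sq_sqrt hd.le
  set r := (1 - u) / (2 * l1) with hrdef
  set s := l1 / l2 with hsdef
  have hu1 : u < 1 := by nlinarith
  have h2l1 : (0:ℝ) < 2 * l1 := by linarith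
  have hr0 : 0 < r := div_pos (by linarith) h2l1
  have hr1 : r < 1 := by
    rw [hrdef, div_lt_one h2l1]
    nlinarith
  have hu' : u = 1 - 2 * l1 * r := by
    rw [hrdef]
    field_simp
    ring
  have hq : (1 - 2 * l1 * r) ^ 2 = 1 - 4 * l1 * l2 := by rw [← hu']; exact hu2
  have hquad : l1 * r ^ 2 + l2 = r := by
    have h40 : (0:ℝ) < 4 * l1 := by linarith
    have h4 : 4 * l1 * (l1 * r ^ 2 + l2) = 4 * l1 * r := by linear_combination hq
    exact mul_left_cancel₀ h40.ne' h4
  have hs0 : 0 < s := div_pos hl1 hl2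
  have hs1 : s < 1 := (div_lt_one hl2).2 h
  have hs' : s * l2 = l1 := by
    rw [hsdef]
    exact div_mul_cancel₀ l1 hl2.ne'
  have hkey : l2 * s ^ 2 + l1 + b12 * s = s := by
    linear_combination (s - 1) * hs' + s * hsum
  have h1r : (0:ℝ) < 1 - r := by linarith
  have h1s : (0:ℝ) < 1 - s := by linarith
  -- the unnormalized stationary function
  set f : ℤ → ℝ := fun z => if 0 ≤ z then r ^ z.toNat else s ^ (-z).toNat with hf
  have hfpos : ∀ z, 0 ≤ f z := by
    intro z
    rw [hf]
    dsimp only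
    split <;> positivity
  -- summability of f with explicit total
  have hgeomr : HasSum (fun n : ℕ => r ^ n) (1 - r)⁻¹ :=
    hasSum_geometric_of_lt_one hr0.le hr1
  have hgeoms : HasSum (fun n : ℕ => s ^ n) (1 - s)⁻¹ :=
    hasSum_geometric_of_lt_one hs0.le hs1
  have hpos : HasSum (fun z : ℤ => if 0 ≤ z then r ^ z.toNat else 0) (1 - r)⁻¹ := by
    have hinj : Function.Injective (fun n : ℕ => (n : ℤ)) := fun a b hab => by
      simpa using hab
    refine (hinj.hasSum_iff ?_).1 ?_
    · intro x hx
      have hx0 : x < 0 := by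
        by_contra hxx
        push_neg at hxx
        exact hx ⟨x.toNat, by simp; omega⟩
      rw [if_neg (by omega)]
    · have hcomp : ((fun z : ℤ => if 0 ≤ z then r ^ z.toNat else 0) ∘ (fun n : ℕ => (n : ℤ)))
          = fun n : ℕ => r ^ n := by
        funext n
        simp
      rw [hcomp]
      exact hgeomr
  have hneg : HasSum (fun z : ℤ => if 0 ≤ z then 0 else s ^ (-z).toNat) (s * (1 - s)⁻¹) := by
    have hinj : Function.Injective (fun n : ℕ => -(n : ℤ) - 1) := fun a b hab => by
      simp only at hab; omega
    refine (hinj.hasSum_iff ?_).1 ?_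
    · intro x hx
      have hx0 : 0 ≤ x := by
        by_contra hxx
        push_neg at hxx
        exact hx ⟨(-x - 1).toNat, by simp; omega⟩
      rw [if_pos hx0]
    · have hcomp : ((fun z : ℤ => if 0 ≤ z then 0 else s ^ (-z).toNat) ∘
          (fun n : ℕ => -(n : ℤ) - 1)) = fun n : ℕ => s * s ^ n := by
        funext n
        have h1 : ¬ (0 : ℤ) ≤ -(n : ℤ) - 1 := by omega
        have h2 : (-(-(n : ℤ) - 1)).toNat = n + 1 := by omega
        simp only [Function.comp_apply, if_neg h1, h2]
        ring
      rw [hcomp]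
      exact hgeoms.mul_left s
  set T : ℝ := (1 - r)⁻¹ + s * (1 - s)⁻¹ with hT
  have hTsum : HasSum f T := by
    have := hpos.add hneg
    convert this using 1
    funext z
    by_cases h0 : 0 ≤ z <;> simp [hf, h0]
  have hT0 : 0 < T := by
    have h1 : (0:ℝ) < (1 - r)⁻¹ := by positivity
    have h2 : (0:ℝ) ≤ s * (1 - s)⁻¹ := by positivity
    rw [hT]; linarith
  -- the key invariance at the level of f
  have hinv : ∀ z : ℤ, HasSum (fun y : ℤ => f y * pker2 l1 l2 b12 y z) (f z) := by
    intro z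
    by_cases hz : z = 0
    · subst hz
      -- decompose into finitely supported part and geometric part
      have hdecomp : (fun y : ℤ => f y * pker2 l1 l2 b12 y 0) =
          fun y : ℤ => ((if y = -1 then l2 * s else 0) + (if y = 1 then l1 * r else 0)) +
            (if 0 ≤ y then b12 * r ^ y.toNat else 0) := by
        funext y
        simp only [pker2, hf]
        by_cases h1 : y = -1
        · subst h1
          norm_num
          ring
        · by_cases h2 : y = 1
          · subst h2
            norm_num
            ring
          · by_cases h3 : 0 ≤ y
            · have c1 : ¬ (0:ℤ) = y + 1 := by omega
              have c2 : ¬ (0:ℤ) = y - 1 := by omega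
              have c3 : ¬ y < 0 := by omega
              simp only [if_pos h3, if_neg h1, if_neg h2, if_neg c1, if_neg c2]
              simp [c3, h3]
              ring
            · have c1 : ¬ (0:ℤ) = y + 1 := by omega
              have c2 : ¬ (0:ℤ) = y - 1 := by omega
              have c4 : ¬ (0:ℤ) = y := by omega
              simp only [if_neg h3, if_neg h1, if_neg h2, if_neg c1, if_neg c2]
              simp [h3, c4]
      rw [hdecomp]
      have hfin : HasSum (fun y : ℤ =>
          (if y = -1 then l2 * s else 0) + (if y = 1 then l1 * r else 0)) (l2 * s + l1 * r) :=
        (hasSum_ite_eq (-1 : ℤ) (l2 * s)).add (hasSum_ite_eq (1 : ℤ) (l1 * r))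
      have hgeo : HasSum (fun y : ℤ => if 0 ≤ y then b12 * r ^ y.toNat else 0)
          (b12 * (1 - r)⁻¹) := by
        have hb := hpos.mul_left b12
        have hfun : (fun y : ℤ => if 0 ≤ y then b12 * r ^ y.toNat else 0) =
            fun y : ℤ => b12 * if 0 ≤ y then r ^ y.toNat else 0 := by
          funext y
          by_cases h0 : 0 ≤ y <;> simp [h0]
        rw [hfun]
        exact hb
      have htot := hfin.add hgeo
      have hval : l2 * s + l1 * r + b12 * (1 - r)⁻¹ = f 0 := by
        have hgoal : (l2 * s + l1 * r) * (1 - r) + b12 = 1 - r := by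
          linear_combination (1 - r) * hs' - hquad + hsum
        have hf0 : f 0 = 1 := by simp [hf]
        rw [hf0]
        field_simp
        linear_combination hgoal
      rwa [hval] at htot
    · -- finitely supported case
      have hsupp : ∀ y ∉ ({z - 1, z, z + 1} : Finset ℤ), f y * pker2 l1 l2 b12 y z = 0 := by
        intro y hy
        simp only [Finset.mem_insert, Finset.mem_singleton] at hy
        push_neg at hy
        obtain ⟨h1, h2, h3⟩ := hy
        have hp : pker2 l1 l2 b12 y z = 0 := by
          rw [pker2, if_neg (show ¬ z = y + 1 by omega), if_neg (show ¬ z = y - 1 by omega),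
            if_neg (show ¬ ((0:ℤ) ≤ y ∧ z = 0) by omega),
            if_neg (show ¬ (y < 0 ∧ z = y) by omega)]
          ring
        rw [hp, mul_zero]
      have hsum' : HasSum (fun y : ℤ => f y * pker2 l1 l2 b12 y z)
          (∑ y ∈ ({z - 1, z, z + 1} : Finset ℤ), f y * pker2 l1 l2 b12 y z) :=
        hasSum_sum_of_ne_finset_zero hsupp
      have hsumeq : ∑ y ∈ ({z - 1, z, z + 1} : Finset ℤ), f y * pker2 l1 l2 b12 y z = f z := by
        rw [Finset.sum_insert (by simp only [Finset.mem_insert, Finset.mem_singleton]; omega),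
          Finset.sum_insert (by simp only [Finset.mem_singleton]; omega),
          Finset.sum_singleton]
        have hp1 : pker2 l1 l2 b12 (z - 1) z = l2 := by
          rw [pker2, if_pos (show z = z - 1 + 1 by omega),
            if_neg (show ¬ z = z - 1 - 1 by omega),
            if_neg (show ¬ ((0:ℤ) ≤ z - 1 ∧ z = 0) by omega),
            if_neg (show ¬ (z - 1 < 0 ∧ z = z - 1) by omega)]
          ring
        have hp3 : pker2 l1 l2 b12 (z + 1) z = l1 := by
          rw [pker2, if_neg (show ¬ z = z + 1 + 1 by omega),
            if_pos (show z = z + 1 - 1 by omega),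
            if_neg (show ¬ ((0:ℤ) ≤ z + 1 ∧ z = 0) by omega),
            if_neg (show ¬ (z + 1 < 0 ∧ z = z + 1) by omega)]
          ring
        rw [hp1, hp3]
        rcases lt_or_gt_of_ne hz with hzn | hzp
        · -- z < 0
          have hp2 : pker2 l1 l2 b12 z z = b12 := by
            rw [pker2, if_neg (show ¬ z = z + 1 by omega),
              if_neg (show ¬ z = z - 1 by omega),
              if_neg (show ¬ ((0:ℤ) ≤ z ∧ z = 0) by omega),
              if_pos ⟨hzn, rfl⟩]
            ring
          rw [hp2]
          by_cases hm1 : z = -1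
          · subst hm1
            have e1 : f (-1 - 1) = s ^ 2 := by
              simp only [hf]
              norm_num
              rfl
            have e2 : f (-1) = s := by
              simp only [hf]
              norm_num
            have e3 : f (-1 + 1) = 1 := by
              simp only [hf]
              norm_num
            rw [e1, e2, e3]
            linear_combination hkey
          · obtain ⟨k, rfl⟩ : ∃ k : ℕ, z = -(k : ℤ) - 2 := ⟨(-z - 2).toNat, by omega⟩
            have e1 : f (-(k:ℤ) - 2 - 1) = s ^ (k + 3) := by
              simp only [hf]
              rw [if_neg (show ¬ (0:ℤ) ≤ -(k:ℤ) - 2 - 1 by omega)]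
              congr 1 <;> omega
            have e2 : f (-(k:ℤ) - 2) = s ^ (k + 2) := by
              simp only [hf]
              rw [if_neg (show ¬ (0:ℤ) ≤ -(k:ℤ) - 2 by omega)]
              congr 1 <;> omega
            have e3 : f (-(k:ℤ) - 2 + 1) = s ^ (k + 1) := by
              simp only [hf]
              rw [if_neg (show ¬ (0:ℤ) ≤ -(k:ℤ) - 2 + 1 by omega)]
              congr 1 <;> omega
            rw [e1, e2, e3]
            linear_combination (s ^ (k + 1)) * hkey
        · -- z > 0
          have hp2 : pker2 l1 l2 b12 z z = 0 := by
            rw [pker2, if_neg (show ¬ z = z + 1 by omega),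
              if_neg (show ¬ z = z - 1 by omega),
              if_neg (show ¬ ((0:ℤ) ≤ z ∧ z = 0) by omega),
              if_neg (show ¬ (z < 0 ∧ z = z) by omega)]
            ring
          rw [hp2]
          obtain ⟨n, rfl⟩ : ∃ n : ℕ, z = (n : ℤ) + 1 := ⟨(z - 1).toNat, by omega⟩
          have e1 : f ((n:ℤ) + 1 - 1) = r ^ n := by
            simp only [hf]
            rw [if_pos (show (0:ℤ) ≤ (n:ℤ) + 1 - 1 by omega)]
            congr 1 <;> omega
          have e2 : f ((n:ℤ) + 1) = r ^ (n + 1) := by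
            simp only [hf]
            rw [if_pos (show (0:ℤ) ≤ (n:ℤ) + 1 by omega)]
            congr 1 <;> omega
          have e3 : f ((n:ℤ) + 1 + 1) = r ^ (n + 2) := by
            simp only [hf]
            rw [if_pos (show (0:ℤ) ≤ (n:ℤ) + 1 + 1 by omega)]
            congr 1 <;> omega
          rw [e1, e2, e3]
          linear_combination (r ^ n) * hquad
      rwa [hsumeq] at hsum'
  -- assemble
  refine ⟨fun z => T⁻¹ * f z, ?_, ?_, ?_, ?_⟩
  · intro y
    have hy := hfpos y
    have hTi : (0:ℝ) ≤ T⁻¹ := by positivity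
    exact mul_nonneg hTi hy
  · exact (hTsum.mul_left T⁻¹).summable
  · rw [(hTsum.mul_left T⁻¹).tsum_eq, inv_mul_cancel₀ hT0.ne']
  · intro z
    have key := (hinv z).mul_left T⁻¹
    have hrw : (fun y : ℤ => T⁻¹ * (f y * pker2 l1 l2 b12 y z)) =
        fun y : ℤ => T⁻¹ * f y * pker2 l1 l2 b12 y z := by
      funext y; ring
    rw [hrw] at key
    exact ⟨key.summable, key.tsum_eq⟩
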